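/- For every integer z ≥ 3, the real symmetric matrix M(2z,2z,2z) has exactly one negative eigenvalue and exactly three positive eigenvalues (counted with multiplicity); in particular its associated bilinear form has signature (+,+,+,−), i.e. it is of hyperbolic (Lorentzian) type. -/

import Mathlib

open Real Matrix

/-- The Coxeter–Schläfli matrix `M(u,v,w)`. -/
noncomputable def coxeterSchlafli (u v w : ℕ) : Matrix (Fin 4) (Fin 4) ℝ :=
  !![1, -Real.cos (π / u), 0, 0;
     -Real.cos (π / u), 1, -Real.cos (π / v), 0;
     0, -Real.cos (π / v), 1, -Real.cos (π / w);
     0, 0, -Real.cos (π / w), 1]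

private theorem det_fin_four' {R : Type*} [CommRing R] (A : Matrix (Fin 4) (Fin 4) R) :
    det A =
      A 0 0 * (A 1 1 * A 2 2 * A 3 3 - A 1 1 * A 2 3 * A 3 2 - A 1 2 * A 2 1 * A 3 3
        + A 1 2 * A 2 3 * A 3 1 + A 1 3 * A 2 1 * A 3 2 - A 1 3 * A 2 2 * A 3 1)
      - A 0 1 * (A 1 0 * A 2 2 * A 3 3 - A 1 0 * A 2 3 * A 3 2 - A 1 2 * A 2 0 * A 3 3
        + A 1 2 * A 2 3 * A 3 0 + A 1 3 * A 2 0 * A 3 2 - A 1 3 * A 2 2 * A 3 0)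
      + A 0 2 * (A 1 0 * A 2 1 * A 3 3 - A 1 0 * A 2 3 * A 3 1 - A 1 1 * A 2 0 * A 3 3
        + A 1 1 * A 2 3 * A 3 0 + A 1 3 * A 2 0 * A 3 1 - A 1 3 * A 2 1 * A 3 0)
      - A 0 3 * (A 1 0 * A 2 1 * A 3 2 - A 1 0 * A 2 2 * A 3 1 - A 1 1 * A 2 0 * A 3 2
        + A 1 1 * A 2 2 * A 3 0 + A 1 2 * A 2 0 * A 3 1 - A 1 2 * A 2 1 * A 3 0) := by
  have e1 : (Fin.succ 2 : Fin 4) = 3 := rfl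
  have e2 : Fin.castSucc (2 : Fin 3) = (2 : Fin 4) := rfl
  rw [Matrix.det_succ_row_zero]
  simp [Fin.sum_univ_succ, Matrix.det_fin_three, Matrix.submatrix_apply, Fin.succAbove,
    e1, e2]
  ring

private theorem card_filter_fin_four (p : Fin 4 → Prop) [DecidablePred p] :
    (Finset.univ.filter p).card =
      (if p 0 then 1 else 0) + (if p 1 then 1 else 0) +
      (if p 2 then 1 else 0) + (if p 3 then 1 else 0) := by
  rw [Finset.card_filter, Fin.sum_univ_four]

set_option maxHeartbeats 2000000 in
theorem coxeterSchlafli_signature (z : ℕ) (hz : 3 ≤ z) :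
    ∃ hM : (coxeterSchlafli (2*z) (2*z) (2*z)).IsHermitian,
      (Finset.univ.filter fun i => hM.eigenvalues i < 0).card = 1 ∧
      (Finset.univ.filter fun i => 0 < hM.eigenvalues i).card = 3 := by
  have hπ := Real.pi_pos
  set c : ℝ := Real.cos (π / (2*z : ℕ)) with hcdef
  have hz6 : (6:ℝ) ≤ ((2*z : ℕ) : ℝ) := by
    push_cast
    have : (3:ℝ) ≤ (z:ℝ) := by exact_mod_cast hz
    linarith
  have hxpos : 0 < π / ((2*z:ℕ):ℝ) := div_pos hπ (by linarith)
  have hxle : π / ((2*z:ℕ):ℝ) ≤ π / 6 :=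
    div_le_div_of_nonneg_left hπ.le (by norm_num) hz6
  have hcge : Real.sqrt 3 / 2 ≤ c := by
    rw [hcdef, ← Real.cos_pi_div_six]
    exact Real.cos_le_cos_of_nonneg_of_le_pi hxpos.le (by linarith) hxle
  have hclt1 : c < 1 := by
    rw [hcdef, ← Real.cos_zero]
    exact Real.cos_lt_cos_of_nonneg_of_le_pi le_rfl (by linarith) hxpos
  have hs3 : Real.sqrt 3 ^ 2 = 3 := Real.sq_sqrt (by norm_num)
  have hcpos : 0 < c := by nlinarith [Real.sqrt_nonneg 3]
  have ht : 3/4 ≤ c^2 := by nlinarith [Real.sqrt_nonneg 3]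
  have ht1 : c^2 < 1 := by nlinarith
  have hMeq : coxeterSchlafli (2*z) (2*z) (2*z) =
      !![1, -c, 0, 0; -c, 1, -c, 0; 0, -c, 1, -c; 0, 0, -c, 1] := rfl
  -- Hermitian
  have hM : (coxeterSchlafli (2*z) (2*z) (2*z)).IsHermitian := by
    show (coxeterSchlafli (2*z) (2*z) (2*z))ᴴ = coxeterSchlafli (2*z) (2*z) (2*z)
    rw [hMeq]
    ext i j
    fin_cases i <;> fin_cases j <;>
      simp [Matrix.conjTranspose_apply, Matrix.vecHead, Matrix.vecTail]
  -- trace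
  have htr : (coxeterSchlafli (2*z) (2*z) (2*z)).trace = 4 := by
    rw [hMeq]
    simp [Matrix.trace, Matrix.diag, Fin.sum_univ_four, Matrix.vecHead, Matrix.vecTail]
    norm_num
  -- sum of eigenvalues
  have hsum : hM.eigenvalues 0 + hM.eigenvalues 1 + hM.eigenvalues 2 + hM.eigenvalues 3 = 4 := by
    have h := congrArg Matrix.trace hM.spectral_theorem
    rw [htr, Unitary.conjStarAlgAut_apply, Matrix.trace_mul_comm, ← Matrix.mul_assoc,
      (Matrix.mem_unitaryGroup_iff').mp (hM.eigenvectorUnitary).2, Matrix.one_mul,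
      Matrix.trace_diagonal] at h
    simpa [Fin.sum_univ_four, RCLike.ofReal_real_eq_id] using h.symm
  -- determinant
  have hdet : (coxeterSchlafli (2*z) (2*z) (2*z)).det = 1 - 3*c^2 + c^4 := by
    rw [hMeq, det_fin_four']
    norm_num [Matrix.vecHead, Matrix.vecTail, Matrix.cons_val_two, Matrix.cons_val_three]
    ring
  have hdetneg : (coxeterSchlafli (2*z) (2*z) (2*z)).det < 0 := by
    rw [hdet]; nlinarith [ht, ht1, hcpos]
  -- product of eigenvalues
  have hprod : hM.eigenvalues 0 * hM.eigenvalues 1 * hM.eigenvalues 2 * hM.eigenvalues 3 < 0 := by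
    have h := hM.det_eq_prod_eigenvalues
    rw [Fin.prod_univ_four] at h
    simp only [RCLike.ofReal_real_eq_id, id] at h
    rw [← h]
    exact hdetneg
  -- every eigenvalue is nonzero and < 3
  have key : ∀ i : Fin 4, hM.eigenvalues i ≠ 0 ∧ hM.eigenvalues i < 3 := by
    intro i
    have hsp := hM.eigenvalues_mem_spectrum_real i
    set μ := hM.eigenvalues i with hμ
    rw [spectrum.mem_iff] at hsp
    have hdet0 : (algebraMap ℝ (Matrix (Fin 4) (Fin 4) ℝ) μ
        - coxeterSchlafli (2*z) (2*z) (2*z)).det = 0 := by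
      by_contra hne
      exact hsp ((Matrix.isUnit_iff_isUnit_det _).mpr (isUnit_iff_ne_zero.mpr hne))
    have hmat : algebraMap ℝ (Matrix (Fin 4) (Fin 4) ℝ) μ - coxeterSchlafli (2*z) (2*z) (2*z) =
        !![μ-1, c, 0, 0; c, μ-1, c, 0; 0, c, μ-1, c; 0, 0, c, μ-1] := by
      rw [Algebra.algebraMap_eq_smul_one, hMeq]
      ext i j
      fin_cases i <;> fin_cases j <;>
        simp [Matrix.one_apply, Matrix.vecHead, Matrix.vecTail] <;> ring
    rw [hmat, det_fin_four'] at hdet0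
    norm_num [Matrix.vecHead, Matrix.vecTail, Matrix.cons_val_two, Matrix.cons_val_three] at hdet0
    have hpoly : ((μ-1)^2)^2 - 3*c^2*(μ-1)^2 + c^4 = 0 := by
      first
        | linear_combination hdet0
        | linear_combination -hdet0
    constructor
    · intro h0
      rw [h0] at hpoly
      nlinarith [ht, ht1, hcpos, mul_pos (mul_pos hcpos hcpos) (sub_pos.mpr ht1)]
    · by_contra hge
      push_neg at hge
      have hy : 4 ≤ (μ-1)^2 := by nlinarith
      nlinarith [hpoly, ht1, hy, hcpos, sq_nonneg c]
  refine ⟨hM, ?_⟩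
  obtain ⟨hne0, hlt0⟩ := key 0
  obtain ⟨hne1, hlt1⟩ := key 1
  obtain ⟨hne2, hlt2⟩ := key 2
  obtain ⟨hne3, hlt3⟩ := key 3
  rcases hne0.lt_or_gt with h0 | h0 <;> rcases hne1.lt_or_gt with h1 | h1 <;>
    rcases hne2.lt_or_gt with h2 | h2 <;> rcases hne3.lt_or_gt with h3 | h3 <;>
  first
    | (exfalso; linarith)
    | exact absurd hprod (not_lt.mpr (mul_pos (mul_pos (mul_pos h0 h1) h2) h3).le)
    | exact absurd hprod (not_lt.mpr (mul_pos (mul_pos (mul_pos_of_neg_of_neg h0 h1) h2) h3).le)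
    | exact absurd hprod
        (not_lt.mpr (mul_pos (mul_pos_of_neg_of_neg (mul_neg_of_neg_of_pos h0 h1) h2) h3).le)
    | exact absurd hprod
        (not_lt.mpr (mul_pos_of_neg_of_neg (mul_neg_of_neg_of_pos (mul_neg_of_neg_of_pos h0 h1) h2) h3).le)
    | exact absurd hprod
        (not_lt.mpr (mul_pos (mul_pos_of_neg_of_neg (mul_neg_of_pos_of_neg h0 h1) h2) h3).le)
    | exact absurd hprod
        (not_lt.mpr (mul_pos_of_neg_of_neg (mul_neg_of_neg_of_pos (mul_neg_of_pos_of_neg h0 h1) h2) h3).le)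
    | exact absurd hprod
        (not_lt.mpr (mul_pos_of_neg_of_neg (mul_neg_of_pos_of_neg (mul_pos h0 h1) h2) h3).le)
    | (refine ⟨?_, ?_⟩ <;> rw [card_filter_fin_four] <;>
        simp [h0, h1, h2, h3, asymm h0, asymm h1, asymm h2, asymm h3])
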